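/- Let A, B ∈ M_{k×ℓ}(F_q) and let ⟨L(A)⟩, ⟨L(B)⟩ be the row spaces of (I_k | A) and (I_k | B) in F_q^{k+ℓ}. Then the subspace distance d_S(⟨L(A)⟩, ⟨L(B)⟩) = 2·rank(A − B). -/

import Mathlib

/-- The row space of the lifted matrix (I_k | A), a subspace of F^{k+ℓ}. -/
def matLift {F : Type} [Field F] {k ℓ : ℕ} (A : Matrix (Fin k) (Fin ℓ) F) :
    Submodule F (Fin (k + ℓ) → F) :=
  Submodule.span F
    (Set.range fun i : Fin k => Fin.append ((1 : Matrix (Fin k) (Fin k) F) i) (A i))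

/-- The subspace distance d_S(U,V) = dim U + dim V - 2 dim(U ⊓ V). -/
noncomputable def subspaceDist {F : Type} [Field F] {n : ℕ}
    (U V : Submodule F (Fin n → F)) : ℕ :=
  Module.finrank F U + Module.finrank F V -
    2 * Module.finrank F (U ⊓ V : Submodule F (Fin n → F))

open Matrix

/-- The linear map x ↦ (x | x ᵥ* A). -/
def liftMap {F : Type} [Field F] {k ℓ : ℕ} (A : Matrix (Fin k) (Fin ℓ) F) :
    (Fin k → F) →ₗ[F] (Fin (k + ℓ) → F) where
  toFun x := Fin.append x (x ᵥ* A)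
  map_add' x y := by
    funext i
    refine Fin.addCases (fun i => ?_) (fun i => ?_) i <;>
      simp [Matrix.add_vecMul]
  map_smul' c x := by
    funext i
    refine Fin.addCases (fun i => ?_) (fun i => ?_) i <;>
      simp [Matrix.smul_vecMul]

lemma liftMap_injective {F : Type} [Field F] {k ℓ : ℕ} (A : Matrix (Fin k) (Fin ℓ) F) :
    Function.Injective (liftMap A) := by
  intro x y h
  funext i
  have := congrFun h (Fin.castAdd ℓ i)
  simpa [liftMap, Fin.append_left] using this

lemma one_row_eq_single {F : Type} [Field F] {k : ℕ} (i : Fin k) :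
    (1 : Matrix (Fin k) (Fin k) F) i = Pi.single i 1 := by
  funext j
  simp [Matrix.one_apply, Pi.single_apply, eq_comm]

lemma range_liftMap {F : Type} [Field F] {k ℓ : ℕ} (A : Matrix (Fin k) (Fin ℓ) F) :
    LinearMap.range (liftMap A) = matLift A := by
  have h1 : (⊤ : Submodule F (Fin k → F)) =
      Submodule.span F (Set.range fun i : Fin k => Pi.single i (1 : F)) := by
    rw [← (Pi.basisFun F (Fin k)).span_eq]
    congr 1
    ext x
    simp [Pi.basisFun_apply]
  rw [matLift, ← Submodule.map_top, h1, Submodule.map_span, ← Set.range_comp]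
  have h2 : ((liftMap A : (Fin k → F) → (Fin (k + ℓ) → F)) ∘ fun i : Fin k => Pi.single i (1 : F))
      = fun i : Fin k => Fin.append ((1 : Matrix (Fin k) (Fin k) F) i) (A i) := by
    funext i
    simp only [Function.comp, liftMap, LinearMap.coe_mk, AddHom.coe_mk]
    rw [one_row_eq_single, Matrix.single_one_vecMul]
    rfl
  rw [h2]

/-- d_S(⟨L(A)⟩, ⟨L(B)⟩) = 2 · rank(A - B). -/
theorem stmt_11 (F : Type) [Field F] (k ℓ : ℕ) (A B : Matrix (Fin k) (Fin ℓ) F) :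
    subspaceDist (matLift A) (matLift B) = 2 * (A - B).rank := by
  classical
  have hA : Module.finrank F (matLift A) = k := by
    rw [← range_liftMap, LinearMap.finrank_range_of_inj (liftMap_injective A)]
    simp
  have hB : Module.finrank F (matLift B) = k := by
    rw [← range_liftMap, LinearMap.finrank_range_of_inj (liftMap_injective B)]
    simp
  -- the intersection
  have hinter : matLift A ⊓ matLift B =
      Submodule.map (liftMap A) (LinearMap.ker (A - B)ᵀ.mulVecLin) := by
    apply le_antisymm
    · rintro v ⟨hvA, hvB⟩
      rw [← range_liftMap] at hvA hvB
      obtain ⟨x, rfl⟩ := hvA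
      obtain ⟨y, hy⟩ := hvB
      have hxy : y = x := by
        funext i
        have := congrFun hy (Fin.castAdd ℓ i)
        simpa [liftMap, Fin.append_left] using this
      subst hxy
      refine ⟨y, ?_, rfl⟩
      rw [SetLike.mem_coe, LinearMap.mem_ker]
      funext j
      have := congrFun hy (Fin.natAdd k j)
      simp only [liftMap, LinearMap.coe_mk, AddHom.coe_mk, Fin.append_right] at this
      simp [Matrix.mulVecLin_apply, Matrix.transpose_sub, Matrix.sub_mulVec, Matrix.mulVec_transpose, this]
    · rintro v ⟨x, hx, rfl⟩
      rw [SetLike.mem_coe, LinearMap.mem_ker] at hx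
      have hAB : x ᵥ* A = x ᵥ* B := by
        have : x ᵥ* (A - B) = 0 := by
          rw [← Matrix.mulVec_transpose]
          exact hx
        rw [Matrix.vecMul_sub, sub_eq_zero] at this
        exact this
      constructor
      · rw [← range_liftMap]; exact ⟨x, rfl⟩
      · rw [← range_liftMap]
        refine ⟨x, ?_⟩
        simp only [liftMap, LinearMap.coe_mk, AddHom.coe_mk, hAB]
  have hker : Module.finrank F (matLift A ⊓ matLift B : Submodule F (Fin (k + ℓ) → F)) =
      Module.finrank F (LinearMap.ker (A - B)ᵀ.mulVecLin) := by
    rw [hinter]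
    exact (Submodule.equivMapOfInjective _ (liftMap_injective A) _).finrank_eq.symm
  have hrn := LinearMap.finrank_range_add_finrank_ker (A - B)ᵀ.mulVecLin
  rw [Module.finrank_pi] at hrn
  simp only [Fintype.card_fin] at hrn
  have hrank : Module.finrank F (LinearMap.range (A - B)ᵀ.mulVecLin) = (A - B).rank := by
    rw [← Matrix.rank_transpose (A - B)]; rfl
  rw [hrank] at hrn
  rw [subspaceDist, hA, hB, hker]
  omega
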